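/- Let f : ℕ+ → ℝ+ be a function such that lim_{r→∞} e^{r^α} f(r) = 0 for every 0 < α < 1, and fix d ∈ ℕ and C_Γ < ∞. Then there exist a non-increasing function F : ℕ → ℝ+ with F|_{ℕ+} ∈ 𝓜 and constants C_F, C'_F < ∞, depending only on f, d, C_Γ, such that f(r) ≤ F(r) for all r ∈ ℕ+ and, for every finite graph Γ satisfying sup_{x∈Γ} |B_r(x)| ≤ 1 + C_Γ r^d for all r ≥ 0, F is an F-function for Γ with constants C_F, C'_F. -/

import Mathlib

open scoped BigOperators ComplexOrder Matrix

noncomputable section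

namespace Stability

/-- The class `𝓜` of quasi-exponentially decaying functions: non-increasing, nonnegative,
and bounded by `C_α e^{-c_α r^α}` for every `0 < α < 1` (for positive arguments). -/
def InM (m : ℕ → ℝ) : Prop :=
  (∀ r, 0 ≤ m r) ∧ (∀ r s : ℕ, r ≤ s → m s ≤ m r) ∧
    ∀ α : ℝ, 0 < α → α < 1 →
      ∃ C c : ℝ, 0 < C ∧ 0 < c ∧ ∀ r : ℕ, 1 ≤ r → m r ≤ C * Real.exp (-(c * (r : ℝ) ^ α))

variable {Γ : Type} [Fintype Γ] [DecidableEq Γ]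

/-- The ball of radius `r` around `x` for the graph distance. -/
def ball (G : SimpleGraph Γ) (x : Γ) (r : ℕ) : Finset Γ :=
  Finset.univ.filter fun y => G.dist x y ≤ r

open Classical in
/-- The ball of a real radius `t` around `x` for the graph distance. -/
def ballR (G : SimpleGraph Γ) (x : Γ) (t : ℝ) : Finset Γ :=
  Finset.univ.filter fun y => (G.dist x y : ℝ) ≤ t

/-- `Γ` has dimension `d` with constant `CΓ`:  `|B_r(x)| ≤ 1 + CΓ r^d`. -/
def HasDim (G : SimpleGraph Γ) (d : ℕ) (CΓ : ℝ) : Prop :=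
  ∀ (x : Γ) (r : ℕ), ((ball G x r).card : ℝ) ≤ 1 + CΓ * (r : ℝ) ^ d

/-- Distance between two sets of vertices (junk value `0` if one of them is empty). -/
def setDist (G : SimpleGraph Γ) (X Y : Finset Γ) : ℕ :=
  sInf {n : ℕ | ∃ x ∈ X, ∃ y ∈ Y, G.dist x y = n}

/-- Distance from a point to a set. -/
def ptDist (G : SimpleGraph Γ) (x : Γ) (Y : Finset Γ) : ℕ := setDist G {x} Y

/-- Diameter of a finite set of vertices. -/
def diam (G : SimpleGraph Γ) (X : Finset Γ) : ℕ :=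
  sSup {n : ℕ | ∃ x ∈ X, ∃ y ∈ X, G.dist x y = n}

/-- The fattening `(Z)_r` of a set `Z`. -/
def fatten (G : SimpleGraph Γ) (Z : Finset Γ) (r : ℕ) : Finset Γ :=
  Finset.univ.filter fun x => ∃ z ∈ Z, G.dist x z ≤ r

/-- The boundary `∂Z = (Z)_1 ∩ (Z^c)_1` of a set `Z`. -/
def boundary (G : SimpleGraph Γ) (Z : Finset Γ) : Finset Γ :=
  fatten G Z 1 ∩ fatten G Zᶜ 1

/-- The rank-one operator `|ψ⟩⟨ψ|` of a vector. -/
def rankOne {ι : Type} (ψ : ι → ℂ) : Matrix ι ι ℂ := fun a b => ψ a * star (ψ b)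

/-- `ψ` is a unit vector for the `ℓ²` norm. -/
def UnitVec {ι : Type} [Fintype ι] (ψ : ι → ℂ) : Prop := ∑ a, Complex.normSq (ψ a) = 1

/-- Operator norm of a matrix, acting on the Euclidean (ℓ²) space. -/
def opNorm {ι : Type} [Fintype ι] [DecidableEq ι] (A : Matrix ι ι ℂ) : ℝ :=
  ‖Matrix.toEuclideanCLM (𝕜 := ℂ) A‖

/-- Trace norm `‖A‖₁ = tr √(AᴴA)` of a matrix. -/
def traceNorm {ι : Type} [Fintype ι] [DecidableEq ι] (A : Matrix ι ι ℂ) : ℝ :=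
  ((Matrix.isHermitian_conjTranspose_mul_self A).eigenvectorUnitary.1 *
    Matrix.diagonal (((↑) : ℝ → ℂ) ∘ Real.sqrt ∘ (Matrix.isHermitian_conjTranspose_mul_self A).eigenvalues) *
    (star (Matrix.isHermitian_conjTranspose_mul_self A).eigenvectorUnitary : Matrix ι ι ℂ)).trace.re

/-- `γ(A) = min (spec(A) \ {0})` (junk value if the set has no infimum in `ℝ`). -/
def mingap {ι : Type} [Fintype ι] [DecidableEq ι] (A : Matrix ι ι ℂ) : ℝ :=
  sInf {t : ℝ | t ≠ 0 ∧ (t : ℂ) ∈ spectrum ℂ A}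

/-- `P` is the orthogonal projector onto the kernel of `A`. -/
def IsKerProj {ι : Type} [Fintype ι] [DecidableEq ι] (A P : Matrix ι ι ℂ) : Prop :=
  P.IsHermitian ∧ P * P = P ∧ A * P = 0 ∧ ∀ v : ι → ℂ, A.mulVec v = 0 → P.mulVec v = v

section ops

variable (κ : Γ → Type) [∀ x, Fintype (κ x)] [∀ x, DecidableEq (κ x)]

/-- Configurations of the whole system; `ℋ = ℂ^(Cfg κ)`. -/
abbrev Cfg : Type := ∀ x : Γ, κ x

/-- Configurations of the subsystem in the region `X`. -/
abbrev SubCfg (X : Finset Γ) : Type := ∀ x : X, κ x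

/-- Observables on the whole system: `𝒜 = B(ℋ)`. -/
abbrev Op : Type := Matrix (Cfg κ) (Cfg κ) ℂ

/-- Embedding `𝒜_X → 𝒜`, `O ↦ O ⊗ 1_{X^c}`. -/
def embed (X : Finset Γ) (O : Matrix (SubCfg κ X) (SubCfg κ X) ℂ) : Op κ := fun a b =>
  if ∀ x, x ∉ X → a x = b x then O (fun x => a x.1) (fun x => b x.1) else 0

/-- `A` is supported in the region `X`. -/
def SupportedIn (X : Finset Γ) (A : Op κ) : Prop := ∃ O, A = embed κ X O

/-- Glue a configuration on `X` and one on `Xᶜ` to a global configuration. -/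
def glue (X : Finset Γ) (a : SubCfg κ X) (c : SubCfg κ Xᶜ) : Cfg κ := fun x =>
  if h : x ∈ X then a ⟨x, h⟩ else c ⟨x, Finset.mem_compl.mpr h⟩

/-- Partial trace `tr_{X^c} : 𝒜 → 𝒜_X`. -/
def ptrace (X : Finset Γ) (A : Op κ) : Matrix (SubCfg κ X) (SubCfg κ X) ℂ := fun a b =>
  ∑ c : SubCfg κ Xᶜ, A (glue κ X a c) (glue κ X b c)

/-- The local trace norm `|A|_X = ‖tr_{X^c} A‖₁`. -/
def locNorm (X : Finset Γ) (A : Op κ) : ℝ := traceNorm (ptrace κ X A)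

/-- Expectation value `⟨A⟩_ρ = tr(ρ A)` (real part). -/
def expVal (ρ A : Op κ) : ℝ := ((ρ * A).trace).re

/-- `ρ` is a density matrix. -/
def IsDensity (ρ : Op κ) : Prop := ρ.PosSemidef ∧ ρ.trace = 1

/-- An interaction: a collection of self-adjoint operators `q_X` supported in `X`. -/
def IsInteraction (q : Finset Γ → Op κ) : Prop :=
  ∀ X, (q X).IsHermitian ∧ SupportedIn κ X (q X)

/-- `‖q‖_m ≤ C` where `‖q‖_m = sup_x Σ_{X ∋ x} ‖q_X‖ / m(1 + diam X)`. -/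
def intNormLE (G : SimpleGraph Γ) (m : ℕ → ℝ) (q : Finset Γ → Op κ) (C : ℝ) : Prop :=
  ∀ x : Γ, ∑ X ∈ Finset.univ.filter (fun X : Finset Γ => x ∈ X),
      opNorm (q X) / m (1 + diam G X) ≤ C

/-- `|||q|||_F ≤ C` where `|||q|||_F = sup_{x,y} Σ_{S ⊇ {x,y}} ‖q_S‖ / F(dist(x,y))`. -/
def fNormLE (G : SimpleGraph Γ) (F : ℕ → ℝ) (q : Finset Γ → Op κ) (C : ℝ) : Prop :=
  ∀ x y : Γ, ∑ S ∈ Finset.univ.filter (fun S : Finset Γ => x ∈ S ∧ y ∈ S),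
      opNorm (q S) / F (G.dist x y) ≤ C

/-- The global Hamiltonian `H = Σ_X h_X`. -/
def ham (h : Finset Γ → Op κ) : Op κ := ∑ X : Finset Γ, h X

/-- The OBC restriction `H_Z = Σ_{X ⊆ Z} h_X`. -/
def hamOn (h : Finset Γ → Op κ) (Z : Finset Γ) : Op κ :=
  ∑ X ∈ Finset.univ.filter (fun X : Finset Γ => X ⊆ Z), h X

/-- The conditional expectation `𝔼_{Y^c} : 𝒜 → 𝒜_Y`, `O ↦ (tr_{Y^c} O / dim ℋ_{Y^c}) ⊗ 1_{Y^c}`.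
Applied to a density matrix it yields `tr_{Y^c}(ρ) ⊗ ι_{Y^c}` with `ι` the normalized trace. -/
def condExp (Y : Finset Γ) (A : Op κ) : Op κ := fun a b =>
  if ∀ x, x ∉ Y → a x = b x then
    ptrace κ Y A (fun x => a x.1) (fun x => b x.1) / (Fintype.card (SubCfg κ Yᶜ) : ℂ)
  else 0

/-- Tensor product of an operator on `Z` with an operator on `Z^c`. -/
def cutTensor (Z : Finset Γ) (A : Matrix (SubCfg κ Z) (SubCfg κ Z) ℂ)
    (B : Matrix (SubCfg κ Zᶜ) (SubCfg κ Zᶜ) ℂ) : Op κ := fun a b =>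
  A (fun x => a x.1) (fun x => b x.1) * B (fun x => a x.1) (fun x => b x.1)

/-- `tr_{Z^c}(μ) ⊗ tr_Z(ρ)`. -/
def splitState (Z : Finset Γ) (μ ρ : Op κ) : Op κ :=
  cutTensor κ Z (ptrace κ Z μ) (ptrace κ Zᶜ ρ)

/-- `Φ` is a ground state of the (self-adjoint) matrix `A`: a unit eigenvector whose
eigenvalue is the minimum of the spectrum. -/
def IsGroundState (A : Op κ) (ψ : Cfg κ → ℂ) : Prop :=
  UnitVec ψ ∧ ∃ lam : ℝ, A.mulVec ψ = (lam : ℂ) • ψ ∧ ∀ z ∈ spectrum ℂ A, lam ≤ z.re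

end ops

/-- The Choi matrix of a map on matrices. -/
def choi {ι : Type} [Fintype ι] [DecidableEq ι] (Φ : Matrix ι ι ℂ → Matrix ι ι ℂ) :
    Matrix (ι × ι) (ι × ι) ℂ := fun p q => Φ (Matrix.single p.1 q.1 1) p.2 q.2

/-- `Φ` is a trace-preserving completely positive map (complete positivity via Choi's theorem). -/
def IsCPTP {ι : Type} [Fintype ι] [DecidableEq ι] (Φ : Matrix ι ι ℂ → Matrix ι ι ℂ) : Prop :=
  IsLinearMap ℂ Φ ∧ (choi Φ).PosSemidef ∧ ∀ A, (Φ A).trace = A.trace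

section stitching

variable (κ : Γ → Type) [∀ x, Fintype (κ x)] [∀ x, DecidableEq (κ x)]

/-- Definition of a family of stitching maps `Σ_Z` with function `m`, for the state `μ`. -/
def IsStitching (G : SimpleGraph Γ) (μ : Op κ) (S : Finset Γ → Op κ → Op κ) (m : ℕ → ℝ) :
    Prop :=
  (∀ Z, IsCPTP (S Z)) ∧
    (∀ Z X : Finset Γ, ∀ ρ : Op κ, IsDensity κ ρ →
      locNorm κ X (S Z ρ - splitState κ Z μ ρ) ≤
        (X.card : ℝ) * m (setDist G (boundary G Z) X)) ∧
    (∀ Z X : Finset Γ, ∀ r : ℕ, 1 ≤ r → ∀ ρ ω : Op κ, IsDensity κ ρ → IsDensity κ ω →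
      locNorm κ X (S Z ρ - S Z ω) ≤
        locNorm κ (fatten G X r) (ρ - ω) + (X.card : ℝ) * m r) ∧
    (∀ Z, S Z μ = μ)

/-- A map on observables preserves almost locality with function `m`. -/
def PreservesAlmostLocality (G : SimpleGraph Γ) (T : Op κ → Op κ) (m : ℕ → ℝ) : Prop :=
  ∀ (X : Finset Γ) (r : ℕ), 1 ≤ r → ∀ O : Op κ, SupportedIn κ X O →
    opNorm (T O - condExp κ (fatten G X r) (T O)) ≤ opNorm O * (X.card : ℝ) * m r

end stitching

section aux

variable (κ κ' : Γ → Type)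
variable [∀ x, Fintype (κ x)] [∀ x, DecidableEq (κ x)]
variable [∀ x, Fintype (κ' x)] [∀ x, DecidableEq (κ' x)]

/-- Sites of the enlarged system `𝓗̃ = ℋ ⊗ ℋ'`. -/
abbrev AuxSites : Γ → Type := fun x => κ x × κ' x

/-- Tensor product of vectors `ψ ⊗ ψ'` in `𝓗̃`. -/
def tensorVec (ψ : Cfg κ → ℂ) (ψ' : Cfg κ' → ℂ) : Cfg (AuxSites κ κ') → ℂ := fun a =>
  ψ (fun x => (a x).1) * ψ' (fun x => (a x).2)

/-- Tensor product of operators `ρ ⊗ ρ'` on `𝓗̃`. -/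
def tensorOp (ρ : Op κ) (ρ' : Op κ') : Op (AuxSites κ κ') := fun a b =>
  ρ (fun x => (a x).1) (fun x => (b x).1) * ρ' (fun x => (a x).2) (fun x => (b x).2)

/-- Partial trace over the auxiliary space, `tr_{ℋ'} : B(𝓗̃) → B(ℋ)`. -/
def ptraceAux (A : Op (AuxSites κ κ')) : Op κ := fun a b =>
  ∑ c : Cfg κ', A (fun x => (a x, c x)) (fun x => (b x, c x))

/-- A product vector `⊗_x π_x`. -/
def IsProductVec (ψ : Cfg κ → ℂ) : Prop :=
  ∃ p : ∀ x : Γ, κ x → ℂ, ∀ a, ψ a = ∏ x : Γ, p x (a x)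

end aux

/-- `U` solves the Schrödinger-type integral equation
`U(s) = 1 + i ∫₀ˢ H(u) U(u) du` on `[0,1]` (entrywise). -/
def SolvesEvolution {ι : Type} [Fintype ι] [DecidableEq ι]
    (H : ℝ → Matrix ι ι ℂ) (U : ℝ → Matrix ι ι ℂ) : Prop :=
  ∀ s ∈ Set.Icc (0 : ℝ) 1, ∀ a b,
    U s a b = (1 : Matrix ι ι ℂ) a b + Complex.I * ∫ u in (0 : ℝ)..s, (H u * U u) a b

/-- The truncated interaction `q̂` associated to the cut `Z | Z^c`. -/
def qhat {ι : Type} (Z : Finset Γ) (q : ℝ → Finset Γ → Matrix ι ι ℂ) :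
    ℝ → Finset Γ → Matrix ι ι ℂ := fun s X => if X ⊆ Z ∨ X ⊆ Zᶜ then q s X else 0

section inv

variable (κ κ' : Γ → Type)
variable [∀ x, Fintype (κ x)] [∀ x, DecidableEq (κ x)]
variable [∀ x, Fintype (κ' x)] [∀ x, DecidableEq (κ' x)]

/-- Assumption (Inv): the data `(q, U, Ω')` witnesses invertibility of the state `Ω = ω`:
`q(s)` is a measurable family of interactions on `𝓗̃` with `sup_s ‖q(s)‖_{m_I} ≤ C_I`,
`U` solves the corresponding evolution equation, and `Ω ⊗ Ω' = U(1) Π` with `Π` a product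
unit vector. -/
def InvData (G : SimpleGraph Γ) (mI : ℕ → ℝ) (CI : ℝ)
    (q : ℝ → Finset Γ → Op (AuxSites κ κ')) (U : ℝ → Op (AuxSites κ κ'))
    (ω : Cfg κ → ℂ) (ω' : Cfg κ' → ℂ) : Prop :=
  (∀ s ∈ Set.Icc (0 : ℝ) 1, IsInteraction (AuxSites κ κ') (q s)) ∧
    (∀ (X : Finset Γ) a b, Measurable fun s => q s X a b) ∧
    (∀ s ∈ Set.Icc (0 : ℝ) 1, intNormLE (AuxSites κ κ') G mI (q s) CI) ∧
    SolvesEvolution (fun s => ∑ X : Finset Γ, q s X) U ∧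
    UnitVec ω' ∧
    ∃ Pv : Cfg (AuxSites κ κ') → ℂ, IsProductVec (AuxSites κ κ') Pv ∧ UnitVec Pv ∧
      tensorVec κ κ' ω ω' = (U 1).mulVec Pv

/-- The stitching map `Σ_Z` built from the unitary `V = V_Z`:
`Σ_Z(ρ) = tr_{ℋ'}[V^*(tr_{Z^c}(V(μ⊗μ')V^*) ⊗ tr_Z(V(ρ⊗μ')V^*))V]`. -/
def stitchMap (Z : Finset Γ) (V : Op (AuxSites κ κ')) (μ : Op κ) (μ' : Op κ')
    (ρ : Op κ) : Op κ :=
  ptraceAux κ κ' (Vᴴ *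
    cutTensor (AuxSites κ κ') Z
      (ptrace (AuxSites κ κ') Z (V * tensorOp κ κ' μ μ' * Vᴴ))
      (ptrace (AuxSites κ κ') Zᶜ (V * tensorOp κ κ' ρ μ' * Vᴴ)) * V)

end inv

/-- An F-function on the graph `Γ` with constants `CF`, `CF'`. -/
def IsFFunction (G : SimpleGraph Γ) (F : ℕ → ℝ) (CF CF' : ℝ) : Prop :=
  (∀ x y : Γ, ∑ z : Γ, F (G.dist x z) * F (G.dist z y) ≤ CF * F (G.dist x y)) ∧
    ∀ x : Γ, ∑ y : Γ, F (G.dist x y) ≤ CF'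

/-- The logarithmic-superadditive envelope `S(f)` of `f`: the supremum of `∏ f(r_i)`
over all compositions `r = r_1 + ⋯ + r_ℓ` with `r_i ∈ ℕ+`. -/
def Senv (f : ℕ → ℝ) (r : ℕ) : ℝ :=
  sSup {t : ℝ | ∃ L : List ℕ, L ≠ [] ∧ (∀ i ∈ L, 1 ≤ i) ∧ L.sum = r ∧ t = (L.map f).prod}

end Stability

namespace Stability

section Lemma10Aux

open Filter Real

private lemma exists_bound_of_tendsto (a : ℕ → ℝ) (h : Filter.Tendsto a Filter.atTop (nhds 0)) :
    ∃ C : ℝ, 0 < C ∧ ∀ r, a r ≤ C := by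
  obtain ⟨N, hN⟩ := Filter.eventually_atTop.1 (h.eventually_lt_const one_pos)
  refine ⟨1 + ∑ i ∈ Finset.range N, |a i|, by positivity, fun r => ?_⟩
  rcases le_or_gt N r with hr | hr
  · have h1 := hN r hr
    have h2 : (0:ℝ) ≤ ∑ i ∈ Finset.range N, |a i| :=
      Finset.sum_nonneg (fun i _ => abs_nonneg (a i))
    linarith
  · have h1 : |a r| ≤ ∑ i ∈ Finset.range N, |a i| :=
      Finset.single_le_sum (fun i _ => abs_nonneg (a i)) (Finset.mem_range.2 hr)
    have := le_abs_self (a r); linarith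

private lemma exists_nat_rpow_ge (A c : ℝ) (hc : 0 < c) :
    ∃ N : ℕ, ∀ r : ℕ, N ≤ r → A ≤ (r:ℝ) ^ c := by
  have h := (tendsto_rpow_atTop hc).comp (tendsto_natCast_atTop_atTop (R := ℝ))
  exact Filter.eventually_atTop.1 (h.eventually_ge_atTop A)
private lemma rpow_dominates (a b qc Cc : ℝ) (ha : 0 ≤ a) (hab : a < b) :
    ∃ N : ℕ, 1 ≤ N ∧ ∀ r : ℕ, N ≤ r →
      (r:ℝ) ^ a + qc * Real.log ((r:ℝ) + 1) + Cc ≤ (r:ℝ) ^ b := by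
  have hb : 0 < b := lt_of_le_of_lt ha hab
  set ε : ℝ := min 1 ((a+b)/2) with hε
  have hε0 : 0 < ε := lt_min one_pos (by linarith)
  have hε1 : ε ≤ 1 := min_le_left _ _
  set m : ℝ := max a ε with hm
  have hm0 : 0 ≤ m := le_trans ha (le_max_left _ _)
  have hmb : m < b := max_lt hab (lt_of_le_of_lt (min_le_right _ _) (by linarith))
  set K : ℝ := 1 + |qc| * (2/ε) + |Cc| with hK
  obtain ⟨N₀, hN₀⟩ := exists_nat_rpow_ge K (b - m) (by linarith)
  refine ⟨max N₀ 1, le_max_right _ _, fun r hr => ?_⟩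
  set x : ℝ := (r:ℝ) with hx
  have hx1 : (1:ℝ) ≤ x := by
    have h1 : (1:ℕ) ≤ r := le_trans (le_max_right _ _) hr
    rw [hx]; exact_mod_cast h1
  have hx0 : (0:ℝ) < x := by linarith
  have hxm : 0 ≤ x ^ m := Real.rpow_nonneg hx0.le _
  have hxm1 : (1:ℝ) ≤ x ^ m := Real.one_le_rpow hx1 hm0
  have t1 : x ^ a ≤ x ^ m := Real.rpow_le_rpow_of_exponent_le hx1 (le_max_left _ _)
  have hxε : 0 ≤ x ^ ε := Real.rpow_nonneg hx0.le _
  have hlog : Real.log (x + 1) ≤ 2/ε * x ^ ε := by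
    have l1 : Real.log (x+1) ≤ (x+1) ^ ε / ε := Real.log_le_rpow_div (by linarith) hε0
    have l2 : (x+1) ^ ε ≤ (2*x) ^ ε :=
      Real.rpow_le_rpow (by linarith) (by linarith) hε0.le
    have l3 : (2*x) ^ ε = 2 ^ ε * x ^ ε := Real.mul_rpow (by norm_num) hx0.le
    have l4 : (2:ℝ) ^ ε ≤ 2 := by
      calc (2:ℝ) ^ ε ≤ 2 ^ (1:ℝ) := Real.rpow_le_rpow_of_exponent_le (by norm_num) hε1
      _ = 2 := Real.rpow_one 2
    have l5 : (x+1) ^ ε ≤ 2 * x ^ ε := by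
      refine l2.trans ?_
      rw [l3]; exact mul_le_mul_of_nonneg_right l4 hxε
    calc Real.log (x+1) ≤ (x+1) ^ ε / ε := l1
      _ ≤ (2 * x ^ ε) / ε := by
          exact (div_le_div_iff_of_pos_right hε0).2 l5
      _ = 2/ε * x ^ ε := by ring
  have t2 : qc * Real.log (x+1) ≤ |qc| * (2/ε) * x ^ m := by
    have hl0 : 0 ≤ Real.log (x+1) := Real.log_nonneg (by linarith)
    have hεm : x ^ ε ≤ x ^ m := Real.rpow_le_rpow_of_exponent_le hx1 (le_max_right _ _)
    calc qc * Real.log (x+1) ≤ |qc| * Real.log (x+1) :=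
          mul_le_mul_of_nonneg_right (le_abs_self qc) hl0
      _ ≤ |qc| * (2/ε * x ^ ε) := mul_le_mul_of_nonneg_left hlog (abs_nonneg qc)
      _ ≤ |qc| * (2/ε * x ^ m) := by
          refine mul_le_mul_of_nonneg_left ?_ (abs_nonneg qc)
          exact mul_le_mul_of_nonneg_left hεm (by positivity)
      _ = |qc| * (2/ε) * x ^ m := by ring
  have t3 : Cc ≤ |Cc| * x ^ m := by
    calc Cc ≤ |Cc| := le_abs_self Cc
      _ = |Cc| * 1 := (mul_one _).symm
      _ ≤ |Cc| * x ^ m := mul_le_mul_of_nonneg_left hxm1 (abs_nonneg Cc)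
  have hKx : K ≤ x ^ (b - m) := hN₀ r (le_trans (le_max_left _ _) hr)
  have final : K * x ^ m ≤ x ^ b := by
    calc K * x ^ m ≤ x ^ (b-m) * x ^ m :=
          mul_le_mul_of_nonneg_right hKx hxm
      _ = x ^ b := by rw [← Real.rpow_add hx0]; ring_nf
  calc x ^ a + qc * Real.log (x + 1) + Cc
      ≤ x ^ m + |qc| * (2/ε) * x ^ m + |Cc| * x ^ m := by linarith
    _ = K * x ^ m := by ring
    _ ≤ x ^ b := final
private lemma u_decay (f : ℕ → ℝ) (hf0 : ∀ r, 0 ≤ f r)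
    (hdecay : ∀ α : ℝ, 0 < α → α < 1 →
      Filter.Tendsto (fun r : ℕ => Real.exp ((r : ℝ) ^ α) * f r) Filter.atTop (nhds 0))
    (q : ℕ) (α : ℝ) (h0 : 0 < α) (h1 : α < 1) :
    ∃ C : ℝ, 0 < C ∧ ∀ r : ℕ, f r * ((r:ℝ)+1)^q ≤ C * Real.exp (-((r:ℝ) ^ α)) := by
  set β : ℝ := (1+α)/2 with hβ
  have hβ0 : 0 < β := by rw [hβ]; linarith
  have hβ1 : β < 1 := by rw [hβ]; linarith
  have hαβ : α < β := by rw [hβ]; linarith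
  obtain ⟨C₀, hC₀0, hC₀⟩ := exists_bound_of_tendsto _ (hdecay β hβ0 hβ1)
  obtain ⟨N, hN1, hN⟩ := rpow_dominates α β q 0 h0.le hαβ
  have hterm : ∀ i : ℕ, 0 ≤ f i * ((i:ℝ)+1)^q * Real.exp ((i:ℝ)^α) := fun i =>
    mul_nonneg (mul_nonneg (hf0 i) (by positivity)) (Real.exp_pos _).le
  set S : ℝ := ∑ i ∈ Finset.range N, f i * ((i:ℝ)+1)^q * Real.exp ((i:ℝ)^α) with hS
  have hS0 : 0 ≤ S := Finset.sum_nonneg fun i _ => hterm i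
  refine ⟨C₀ + S, by linarith, fun r => ?_⟩
  set x : ℝ := (r:ℝ) with hx
  have hx0 : (0:ℝ) ≤ x := by positivity
  rcases le_or_gt N r with hr | hr
  · have h3 : Real.exp (x ^ β) * f r ≤ C₀ := hC₀ r
    have hfr : f r ≤ C₀ * Real.exp (-(x ^ β)) := by
      have key : f r = Real.exp (-(x ^ β)) * (Real.exp (x ^ β) * f r) := by
        rw [← mul_assoc, ← Real.exp_add]; simp
      rw [key]
      calc Real.exp (-(x ^ β)) * (Real.exp (x ^ β) * f r)
          ≤ Real.exp (-(x ^ β)) * C₀ := mul_le_mul_of_nonneg_left h3 (Real.exp_pos _).le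
        _ = C₀ * Real.exp (-(x ^ β)) := by ring
    have hpow : (x+1)^q * Real.exp (-(x ^ β)) ≤ Real.exp (-(x ^ α)) := by
      have hexp : (x+1)^q = Real.exp ((q:ℝ) * Real.log (x+1)) := by
        rw [← Real.log_pow, Real.exp_log (by positivity)]
      rw [hexp, ← Real.exp_add]
      apply Real.exp_le_exp.2
      have h5 : x ^ α + (q:ℝ) * Real.log (x + 1) + 0 ≤ x ^ β := hN r hr
      linarith
    calc f r * (x+1)^q ≤ (C₀ * Real.exp (-(x ^ β))) * (x+1)^q :=
          mul_le_mul_of_nonneg_right hfr (by positivity)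
      _ = C₀ * ((x+1)^q * Real.exp (-(x ^ β))) := by ring
      _ ≤ C₀ * Real.exp (-(x ^ α)) := mul_le_mul_of_nonneg_left hpow hC₀0.le
      _ ≤ (C₀ + S) * Real.exp (-(x ^ α)) := by
          apply mul_le_mul_of_nonneg_right _ (Real.exp_pos _).le
          linarith
  · have hmem : f r * (x+1)^q * Real.exp (x^α) ≤ S :=
      Finset.single_le_sum (f := fun i => f i * ((i:ℝ)+1)^q * Real.exp ((i:ℝ)^α))
        (fun i _ => hterm i) (Finset.mem_range.2 hr)
    have key : f r * (x+1)^q =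
        (f r * (x+1)^q * Real.exp (x^α)) * Real.exp (-(x^α)) := by
      rw [mul_assoc (f r * (x+1)^q), ← Real.exp_add]; simp
    rw [key]
    apply mul_le_mul_of_nonneg_right _ (Real.exp_pos _).le
    linarith
private noncomputable def ubar (u : ℕ → ℝ) (s : ℕ) : ℝ := ⨆ t : ℕ, u (s + t)
private noncomputable def vfun (u : ℕ → ℝ) (s : ℕ) : ℝ := ubar u s + Real.exp (-((s:ℝ)^2))
private noncomputable def gfun (u : ℕ → ℝ) (s : ℕ) : ℝ := -Real.log (vfun u s)
private noncomputable def Ashift (u : ℕ → ℝ) : ℝ := 1 + max 0 (-(gfun u 1))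
private noncomputable def gplus (u : ℕ → ℝ) (s : ℕ) : ℝ := gfun u s + Ashift u

section ubar
variable {u : ℕ → ℝ} {C : ℝ}

private lemma ubar_bddAbove (hC : ∀ r, u r ≤ C) (s : ℕ) :
    BddAbove (Set.range fun t => u (s + t)) :=
  ⟨C, by rintro _ ⟨t, rfl⟩; exact hC _⟩

private lemma le_ubar (hC : ∀ r, u r ≤ C) (s : ℕ) : u s ≤ ubar u s := by
  have h := le_ciSup (ubar_bddAbove hC s) 0
  simpa [ubar] using h

private lemma ubar_anti (hC : ∀ r, u r ≤ C) {s s' : ℕ} (h : s ≤ s') :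
    ubar u s' ≤ ubar u s := by
  refine ciSup_le fun t => ?_
  have he : s' + t = s + ((s' - s) + t) := by omega
  rw [he]
  exact le_ciSup (ubar_bddAbove hC s) _

private lemma ubar_le (hu0 : ∀ r, 0 ≤ u r) {B α : ℝ} (hB : 0 ≤ B) (hα : 0 ≤ α)
    (h : ∀ r : ℕ, u r ≤ B * Real.exp (-((r:ℝ) ^ α))) (s : ℕ) :
    ubar u s ≤ B * Real.exp (-((s:ℝ) ^ α)) := by
  refine ciSup_le fun t => ?_
  refine (h (s+t)).trans ?_
  apply mul_le_mul_of_nonneg_left _ hB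
  apply Real.exp_le_exp.2
  apply neg_le_neg
  apply Real.rpow_le_rpow (by positivity) (by push_cast; linarith) hα

private lemma ubar_nonneg (hu0 : ∀ r, 0 ≤ u r) (hC : ∀ r, u r ≤ C) (s : ℕ) :
    0 ≤ ubar u s := (hu0 s).trans (le_ubar hC s)

private lemma vfun_pos (hu0 : ∀ r, 0 ≤ u r) (hC : ∀ r, u r ≤ C) (s : ℕ) :
    0 < vfun u s := by
  have := ubar_nonneg hu0 hC s
  have := Real.exp_pos (-((s:ℝ)^2))
  unfold vfun; linarith

private lemma u_le_vfun (hC : ∀ r, u r ≤ C) (s : ℕ) : u s ≤ vfun u s := by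
  have h1 := le_ubar hC s
  have h2 := (Real.exp_pos (-((s:ℝ)^2))).le
  unfold vfun; linarith

private lemma vfun_anti (hu0 : ∀ r, 0 ≤ u r) (hC : ∀ r, u r ≤ C) {s s' : ℕ} (h : s ≤ s') :
    vfun u s' ≤ vfun u s := by
  have h1 := ubar_anti hC h
  have h2 : Real.exp (-((s':ℝ)^2)) ≤ Real.exp (-((s:ℝ)^2)) := by
    apply Real.exp_le_exp.2
    have : ((s:ℝ))^2 ≤ ((s':ℝ))^2 := by
      apply pow_le_pow_left₀ (by positivity) (by exact_mod_cast h)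
    linarith
  unfold vfun; linarith

private lemma gfun_mono (hu0 : ∀ r, 0 ≤ u r) (hC : ∀ r, u r ≤ C) {s s' : ℕ} (h : s ≤ s') :
    gfun u s ≤ gfun u s' := by
  unfold gfun
  have := Real.log_le_log (vfun_pos hu0 hC s') (vfun_anti hu0 hC h)
  linarith

private lemma exp_neg_gfun (hu0 : ∀ r, 0 ≤ u r) (hC : ∀ r, u r ≤ C) (s : ℕ) :
    Real.exp (-(gfun u s)) = vfun u s := by
  unfold gfun
  rw [neg_neg, Real.exp_log (vfun_pos hu0 hC s)]

private lemma one_le_gplus (hu0 : ∀ r, 0 ≤ u r) (hC : ∀ r, u r ≤ C) {k : ℕ} (hk : 1 ≤ k) :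
    1 ≤ gplus u k := by
  have h1 := gfun_mono hu0 hC hk
  have h2 : -(gfun u 1) ≤ max 0 (-(gfun u 1)) := le_max_right _ _
  unfold gplus Ashift; linarith

private lemma gplus_mono (hu0 : ∀ r, 0 ≤ u r) (hC : ∀ r, u r ≤ C) {s s' : ℕ} (h : s ≤ s') :
    gplus u s ≤ gplus u s' := by
  have := gfun_mono hu0 hC h; unfold gplus; linarith

private lemma Ashift_nonneg : 0 ≤ Ashift u := by
  have : (0:ℝ) ≤ max 0 (-(gfun u 1)) := le_max_left _ _
  unfold Ashift; linarith

-- decay transfer to v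
private lemma vfun_le (hu0 : ∀ r, 0 ≤ u r) {B α : ℝ} (hB : 0 ≤ B) (hα0 : 0 < α) (hα : α ≤ 1)
    (h : ∀ r : ℕ, u r ≤ B * Real.exp (-((r:ℝ) ^ α))) {s : ℕ} (hs : 1 ≤ s) :
    vfun u s ≤ (B + 1) * Real.exp (-((s:ℝ) ^ α)) := by
  have h1 := ubar_le hu0 hB hα0.le h s
  have hs1 : (1:ℝ) ≤ (s:ℝ) := by exact_mod_cast hs
  have h2 : Real.exp (-((s:ℝ)^2)) ≤ Real.exp (-((s:ℝ) ^ α)) := by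
    apply Real.exp_le_exp.2
    have ha : ((s:ℝ)) ^ α ≤ (s:ℝ) ^ (1:ℝ) := Real.rpow_le_rpow_of_exponent_le hs1 hα
    rw [Real.rpow_one] at ha
    nlinarith
  unfold vfun; nlinarith [Real.exp_pos (-((s:ℝ) ^ α))]

-- lower bound on gplus
private lemma gplus_lower (hu0 : ∀ r, 0 ≤ u r) {B α : ℝ} (hB : 0 < B)
    (h : ∀ s : ℕ, 1 ≤ s → vfun u s ≤ B * Real.exp (-((s:ℝ) ^ α))) {s : ℕ} (hs : 1 ≤ s)
    (hC : ∀ r, u r ≤ C) :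
    (s:ℝ) ^ α - Real.log B ≤ gplus u s := by
  have hv := vfun_pos hu0 hC s
  have h2 := Real.log_le_log hv (h s hs)
  rw [Real.log_mul (ne_of_gt hB) (ne_of_gt (Real.exp_pos _)), Real.log_exp] at h2
  have h3 : gfun u s ≥ (s:ℝ) ^ α - Real.log B := by unfold gfun; linarith
  have h4 := Ashift_nonneg (u := u)
  unfold gplus; linarith

end ubar
private noncomputable def Gsub (g : ℕ → ℝ) (r : ℕ) : ℝ :=
  if h : r = 0 then 0 else
    (r:ℝ) * (Finset.Icc 1 r).inf' ⟨1, by simp [Finset.mem_Icc]; omega⟩ (fun k => g k / (k:ℝ))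

private noncomputable def Ghat (g : ℕ → ℝ) (r : ℕ) : ℝ :=
  (Finset.range (r+1)).sup' ⟨0, by simp⟩ (Gsub g)

section G
variable {g : ℕ → ℝ}

private lemma Gsub_zero : Gsub g 0 = 0 := by simp [Gsub]

private lemma Gsub_eq {r : ℕ} (hr : r ≠ 0) :
    Gsub g r = (r:ℝ) * (Finset.Icc 1 r).inf'
      ⟨1, by simp [Finset.mem_Icc]; omega⟩ (fun k => g k / (k:ℝ)) := by
  simp [Gsub, hr]

private lemma Gsub_nonneg (hg : ∀ k, 1 ≤ k → 0 ≤ g k) (r : ℕ) : 0 ≤ Gsub g r := by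
  rcases eq_or_ne r 0 with h | h
  · simp [h, Gsub_zero]
  · rw [Gsub_eq h]
    apply mul_nonneg (by positivity)
    apply Finset.le_inf'
    intro k hk
    rw [Finset.mem_Icc] at hk
    exact div_nonneg (hg k hk.1) (by positivity)

private lemma Gsub_le (hg : ∀ k, 1 ≤ k → 0 ≤ g k) {r : ℕ} (hr : 1 ≤ r) :
    Gsub g r ≤ g r := by
  rw [Gsub_eq (by omega)]
  have hmem : r ∈ Finset.Icc 1 r := by simp [Finset.mem_Icc]; omega
  have h1 : (Finset.Icc 1 r).inf' ⟨1, by simp [Finset.mem_Icc]; omega⟩ (fun k => g k / (k:ℝ))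
      ≤ g r / (r:ℝ) := Finset.inf'_le _ hmem
  have hr0 : (0:ℝ) < (r:ℝ) := by exact_mod_cast hr
  calc (r:ℝ) * (Finset.Icc 1 r).inf' _ (fun k => g k / (k:ℝ))
      ≤ (r:ℝ) * (g r / (r:ℝ)) := mul_le_mul_of_nonneg_left h1 hr0.le
    _ = g r := by field_simp

private lemma Gsub_subadd (hg : ∀ k, 1 ≤ k → 0 ≤ g k) (a b : ℕ) :
    Gsub g (a+b) ≤ Gsub g a + Gsub g b := by
  rcases eq_or_ne a 0 with ha | ha
  · simp [ha, Gsub_zero]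
  rcases eq_or_ne b 0 with hb | hb
  · simp [hb, Gsub_zero]
  have hab : a + b ≠ 0 := by omega
  rw [Gsub_eq ha, Gsub_eq hb, Gsub_eq hab]
  obtain ⟨ka, hka, hkae⟩ := Finset.exists_mem_eq_inf' (s := Finset.Icc 1 a)
    ⟨1, by simp [Finset.mem_Icc]; omega⟩ (fun k => g k / (k:ℝ))
  obtain ⟨kb, hkb, hkbe⟩ := Finset.exists_mem_eq_inf' (s := Finset.Icc 1 b)
    ⟨1, by simp [Finset.mem_Icc]; omega⟩ (fun k => g k / (k:ℝ))
  set I := (Finset.Icc 1 (a+b)).inf' ⟨1, by simp [Finset.mem_Icc]; omega⟩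
    (fun k => g k / (k:ℝ)) with hI
  have hIa : I ≤ g ka / (ka:ℝ) := by
    apply Finset.inf'_le
    rw [Finset.mem_Icc] at hka ⊢; omega
  have hIb : I ≤ g kb / (kb:ℝ) := by
    apply Finset.inf'_le
    rw [Finset.mem_Icc] at hkb ⊢; omega
  rw [hkae, hkbe]
  have ha0 : (0:ℝ) ≤ (a:ℝ) := by positivity
  have hb0 : (0:ℝ) ≤ (b:ℝ) := by positivity
  have expand : ((a+b:ℕ):ℝ) * I = (a:ℝ) * I + (b:ℝ) * I := by push_cast; ring
  rw [expand]
  have h1 : (a:ℝ) * I ≤ (a:ℝ) * (g ka / (ka:ℝ)) := mul_le_mul_of_nonneg_left hIa ha0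
  have h2 : (b:ℝ) * I ≤ (b:ℝ) * (g kb / (kb:ℝ)) := mul_le_mul_of_nonneg_left hIb hb0
  linarith

private lemma Gsub_lower {c α : ℝ} (hc : 0 < c) (hα1 : α ≤ 1)
    (h : ∀ k : ℕ, 1 ≤ k → c * (k:ℝ) ^ α ≤ g k) {r : ℕ} (hr : 1 ≤ r) :
    c * (r:ℝ) ^ α ≤ Gsub g r := by
  rw [Gsub_eq (by omega)]
  obtain ⟨k, hk, hke⟩ := Finset.exists_mem_eq_inf' (s := Finset.Icc 1 r)
    ⟨1, by simp [Finset.mem_Icc]; omega⟩ (fun k => g k / (k:ℝ))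
  rw [Finset.mem_Icc] at hk
  have hk0 : (0:ℝ) < (k:ℝ) := by exact_mod_cast hk.1
  have hr0 : (0:ℝ) < (r:ℝ) := by have : (0:ℕ) < r := hr; exact_mod_cast this
  have hkr : (k:ℝ) ≤ (r:ℝ) := by exact_mod_cast hk.2
  have step1 : c * (k:ℝ) ^ (α - 1) ≤ g k / (k:ℝ) := by
    have h1 := h k hk.1
    have hkpow : (k:ℝ) ^ (α-1) = (k:ℝ) ^ α / (k:ℝ) := by
      rw [Real.rpow_sub hk0, Real.rpow_one]
    rw [hkpow, mul_div_assoc']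
    exact (div_le_div_iff_of_pos_right hk0).2 h1
  have step2 : c * (r:ℝ) ^ (α - 1) ≤ g k / (k:ℝ) := by
    refine le_trans ?_ step1
    apply mul_le_mul_of_nonneg_left _ hc.le
    exact Real.rpow_le_rpow_of_nonpos hk0 hkr (by linarith)
  have hmul : (r:ℝ) * (r:ℝ) ^ (α-1) = (r:ℝ) ^ α := by
    have h2 := Real.rpow_add hr0 1 (α-1)
    rw [show (1:ℝ)+(α-1) = α by ring, Real.rpow_one] at h2
    exact h2.symm
  calc c * (r:ℝ) ^ α = (r:ℝ) * (c * (r:ℝ) ^ (α-1)) := by rw [← hmul]; ring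
    _ ≤ (r:ℝ) * (g k / (k:ℝ)) := mul_le_mul_of_nonneg_left step2 hr0.le
    _ = (r:ℝ) * (Finset.Icc 1 r).inf' ⟨1, by simp [Finset.mem_Icc]; omega⟩
        (fun k => g k / (k:ℝ)) := by rw [hke]

private lemma Ghat_ne (r : ℕ) : (Finset.range (r+1)).Nonempty := ⟨0, by simp⟩

private lemma Gsub_le_Ghat (r : ℕ) : Gsub g r ≤ Ghat g r :=
  Finset.le_sup' (Gsub g) (by simp)

private lemma Ghat_nonneg (r : ℕ) : 0 ≤ Ghat g r := by
  have h := Finset.le_sup' (Gsub g) (Finset.mem_range.2 (Nat.succ_pos r))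
  rw [Gsub_zero] at h
  exact h

private lemma Ghat_mono {r r' : ℕ} (h : r ≤ r') : Ghat g r ≤ Ghat g r' := by
  apply Finset.sup'_le
  intro k hk
  apply Finset.le_sup'
  rw [Finset.mem_range] at hk ⊢; omega

private lemma Ghat_le (hg : ∀ k, 1 ≤ k → 0 ≤ g k)
    (hgm : ∀ s s' : ℕ, s ≤ s' → g s ≤ g s') {r : ℕ} (hr : 1 ≤ r) (hgr : 0 ≤ g r) :
    Ghat g r ≤ g r := by
  apply Finset.sup'_le
  intro k hk
  rw [Finset.mem_range] at hk
  rcases eq_or_ne k 0 with h0 | h0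
  · rw [h0, Gsub_zero]; exact hgr
  · exact le_trans (Gsub_le hg (by omega)) (hgm k r (by omega))

private lemma Ghat_subadd (hg : ∀ k, 1 ≤ k → 0 ≤ g k) (a b : ℕ) :
    Ghat g (a+b) ≤ Ghat g a + Ghat g b := by
  apply Finset.sup'_le
  intro k hk
  rw [Finset.mem_range] at hk
  have hksplit : k = min k a + (k - min k a) := by omega
  have h1 : Gsub g k ≤ Gsub g (min k a) + Gsub g (k - min k a) := by
    conv_lhs => rw [hksplit]
    exact Gsub_subadd hg _ _
  have h2 : Gsub g (min k a) ≤ Ghat g a :=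
    Finset.le_sup' (Gsub g) (Finset.mem_range.2 (by omega))
  have h3 : Gsub g (k - min k a) ≤ Ghat g b :=
    Finset.le_sup' (Gsub g) (Finset.mem_range.2 (by omega))
  linarith

private lemma Ghat_lower {c α : ℝ} (hc : 0 < c) (hα1 : α ≤ 1)
    (h : ∀ k : ℕ, 1 ≤ k → c * (k:ℝ) ^ α ≤ g k) {r : ℕ} (hr : 1 ≤ r) :
    c * (r:ℝ) ^ α ≤ Ghat g r :=
  le_trans (Gsub_lower hc hα1 h hr) (Gsub_le_Ghat r)

end G

private noncomputable def F0 (q : ℕ) (n : ℕ) : ℝ :=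
  ∑' m : ℕ, if n ≤ m then 1/((m:ℝ)+1)^q else 0

section F0sec
variable {q : ℕ} (hq : 2 ≤ q)

private lemma summable_hterm (hq : 2 ≤ q) : Summable (fun m : ℕ => 1/((m:ℝ)+1)^q) := by
  have h := Real.summable_one_div_nat_pow.2 hq
  have h2 := (summable_nat_add_iff (f := fun n : ℕ => 1/(n:ℝ)^q) 1).2 h
  refine h2.congr fun m => ?_
  push_cast; ring_nf

private lemma summable_F0term (hq : 2 ≤ q) (n : ℕ) :
    Summable (fun m : ℕ => if n ≤ m then 1/((m:ℝ)+1)^q else 0) := by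
  refine Summable.of_nonneg_of_le (fun m => ?_) (fun m => ?_) (summable_hterm hq)
  · split <;> positivity
  · split
    · exact le_refl _
    · positivity

private lemma F0_nonneg (n : ℕ) : 0 ≤ F0 q n := by
  rw [F0]
  exact tsum_nonneg fun m => by split <;> positivity

private lemma hterm_le_F0 (hq : 2 ≤ q) (n : ℕ) : 1/((n:ℝ)+1)^q ≤ F0 q n := by
  rw [F0]
  have h := Summable.le_tsum (summable_F0term hq n) n
    (fun m _ => by split <;> positivity)
  simpa using h

private lemma F0_pos (hq : 2 ≤ q) (n : ℕ) : 0 < F0 q n :=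
  lt_of_lt_of_le (by positivity) (hterm_le_F0 hq n)

private lemma F0_anti (hq : 2 ≤ q) {n n' : ℕ} (h : n ≤ n') : F0 q n' ≤ F0 q n := by
  rw [F0, F0]
  refine Summable.tsum_le_tsum (fun m => ?_) (summable_F0term hq n') (summable_F0term hq n)
  rcases le_or_gt n' m with hm | hm
  · rw [if_pos hm, if_pos (le_trans h hm)]
  · rw [if_neg (by omega)]
    split <;> positivity

private lemma F0_double (hq : 2 ≤ q) (a : ℕ) : F0 q a ≤ 2^q * F0 q (2*a) := by
  have key : (1/(2:ℝ)^q) * F0 q a ≤ F0 q (2*a) := by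
    rw [F0, F0, ← tsum_mul_left]
    apply Summable.tsum_le_tsum_of_inj (fun m => 2*m+1)
      (fun m m' h => by simp only at h; omega)
      (fun c _ => by split <;> positivity)
      (fun m => ?_)
      ((summable_F0term hq a).mul_left _)
      (summable_F0term hq (2*a))
    show (1/(2:ℝ)^q) * (if a ≤ m then 1/((m:ℝ)+1)^q else 0) ≤
      if 2*a ≤ 2*m+1 then 1/(((2*m+1:ℕ):ℝ)+1)^q else 0
    rcases le_or_gt a m with hm | hm
    · rw [if_pos hm, if_pos (by omega)]
      have h2 : ((2*m+1:ℕ):ℝ) + 1 = 2*((m:ℝ)+1) := by push_cast; ring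
      rw [h2, mul_pow]
      ring_nf
      exact le_refl _
    · rw [if_neg (by omega : ¬ a ≤ m), mul_zero]
      split <;> positivity
  have h2 : (0:ℝ) < 2^q := by positivity
  calc F0 q a = 2^q * ((1/(2:ℝ)^q) * F0 q a) := by field_simp
    _ ≤ 2^q * F0 q (2*a) := mul_le_mul_of_nonneg_left key h2.le

end F0sec


private lemma sum_F0_le {Γ : Type} [Fintype Γ] [DecidableEq Γ] (G : SimpleGraph Γ)
    (d : ℕ) (M : ℝ) (hM : 0 ≤ M)
    (hdim : ∀ (x : Γ) (r : ℕ), ((ball G x r).card : ℝ) ≤ 1 + M * (r:ℝ)^d) (x : Γ) :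
    ∑ y : Γ, F0 (d+3) (G.dist x y) ≤
      ∑' m : ℕ, (1 + M * (m:ℝ)^d) * (1/((m:ℝ)+1)^(d+3)) := by
  have hq : 2 ≤ d+3 := by omega
  have hswap : ∑ y : Γ, F0 (d+3) (G.dist x y) =
      ∑' m : ℕ, ∑ y : Γ, (if G.dist x y ≤ m then 1/((m:ℝ)+1)^(d+3) else 0) := by
    simp only [F0]
    exact (Summable.tsum_finsetSum (fun y _ => summable_F0term hq (G.dist x y))).symm
  have hinner : ∀ m : ℕ, ∑ y : Γ, (if G.dist x y ≤ m then 1/((m:ℝ)+1)^(d+3) else 0) =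
      ((ball G x m).card : ℝ) * (1/((m:ℝ)+1)^(d+3)) := by
    intro m
    rw [show (ball G x m) = Finset.univ.filter (fun y => G.dist x y ≤ m) from rfl,
      ← Finset.sum_filter, Finset.sum_const, nsmul_eq_mul]
  rw [hswap]
  have hLsum : Summable (fun m : ℕ =>
      ∑ y : Γ, (if G.dist x y ≤ m then 1/((m:ℝ)+1)^(d+3) else 0)) := by
    apply Summable.of_nonneg_of_le
      (fun m => Finset.sum_nonneg fun y _ => by split <;> positivity)
      (fun m => ?_) ((summable_hterm hq).mul_left (Fintype.card Γ : ℝ))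
    rw [hinner m]
    apply mul_le_mul_of_nonneg_right _ (by positivity)
    exact_mod_cast Nat.cast_le.2 (Finset.card_le_card (Finset.filter_subset _ _))
  have hRsum : Summable (fun m : ℕ => (1 + M * (m:ℝ)^d) * (1/((m:ℝ)+1)^(d+3))) := by
    apply Summable.of_nonneg_of_le (fun m => by positivity) (fun m => ?_)
      ((summable_hterm (q := 3) (by norm_num)).mul_left (1+M))
    have hm1 : (0:ℝ) < (m:ℝ)+1 := by positivity
    have h1 : 1 + M*(m:ℝ)^d ≤ (1+M)*((m:ℝ)+1)^d := by
      have e1 : (1:ℝ) ≤ ((m:ℝ)+1)^d := one_le_pow₀ (by linarith)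
      have e2 : (m:ℝ)^d ≤ ((m:ℝ)+1)^d := pow_le_pow_left₀ (by positivity) (by linarith) d
      nlinarith
    calc (1 + M*(m:ℝ)^d) * (1/((m:ℝ)+1)^(d+3))
        ≤ ((1+M)*((m:ℝ)+1)^d) * (1/((m:ℝ)+1)^(d+3)) :=
          mul_le_mul_of_nonneg_right h1 (by positivity)
      _ = (1+M) * (1/((m:ℝ)+1)^3) := by
          rw [pow_add]
          field_simp
  refine Summable.tsum_le_tsum (fun m => ?_) hLsum hRsum
  rw [hinner m]
  exact mul_le_mul_of_nonneg_right (hdim x m) (by positivity)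


end Lemma10Aux

/-- **Lemma 10 (domination by an F-function in `𝓜`)**.  Let `f : ℕ+ → ℝ+` satisfy
`lim_{r→∞} e^{r^α} f(r) = 0` for every `0 < α < 1`, and fix `d ∈ ℕ` and `C_Γ < ∞`.  Then
there exist a non-increasing `F : ℕ → ℝ+` with `F|_{ℕ+} ∈ 𝓜` and constants
`C_F, C'_F < ∞`, depending only on `f, d, C_Γ`, such that `f(r) ≤ F(r)` for all
`r ∈ ℕ+` and, for every finite graph `Γ` of dimension `d` with constant `C_Γ`, `F` is an
F-function for `Γ` with constants `C_F, C'_F`. -/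
theorem dominating_fFunction_exists
    (f : ℕ → ℝ) (hf0 : ∀ r, 0 ≤ f r)
    (hdecay : ∀ α : ℝ, 0 < α → α < 1 →
      Filter.Tendsto (fun r : ℕ => Real.exp ((r : ℝ) ^ α) * f r) Filter.atTop (nhds 0))
    (d : ℕ) (CΓ : ℝ) :
    ∃ (F : ℕ → ℝ) (CF CF' : ℝ), InM F ∧ (∀ r : ℕ, 1 ≤ r → f r ≤ F r) ∧
      ∀ (Γ : Type) [Fintype Γ] [DecidableEq Γ] (G : SimpleGraph Γ), G.Connected →
        HasDim G d CΓ → IsFFunction G F CF CF' := by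
  classical
  have hq2 : 2 ≤ d + 3 := by omega
  set u : ℕ → ℝ := fun r => f r * ((r:ℝ)+1)^(d+3) with hudef
  have hu0 : ∀ r, 0 ≤ u r := fun r => mul_nonneg (hf0 r) (by positivity)
  have hudecay : ∀ α : ℝ, 0 < α → α < 1 →
      ∃ C, 0 < C ∧ ∀ r : ℕ, u r ≤ C * Real.exp (-((r:ℝ)^α)) :=
    fun α h0 h1 => u_decay f hf0 hdecay (d+3) α h0 h1
  obtain ⟨Cb, hCb0, hCb⟩ := hudecay (1/2) (by norm_num) (by norm_num)
  have hub : ∀ r, u r ≤ Cb := by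
    intro r
    refine (hCb r).trans ?_
    have h1 : Real.exp (-((r:ℝ)^((1:ℝ)/2))) ≤ 1 := by
      rw [Real.exp_le_one_iff]
      have := Real.rpow_nonneg (by positivity : (0:ℝ) ≤ (r:ℝ)) ((1:ℝ)/2)
      linarith
    nlinarith
  have hvdecay : ∀ α : ℝ, 0 < α → α < 1 →
      ∃ B, 1 < B ∧ ∀ s : ℕ, 1 ≤ s → vfun u s ≤ B * Real.exp (-((s:ℝ)^α)) := by
    intro α h0 h1
    obtain ⟨C, hC0, hC⟩ := hudecay α h0 h1
    refine ⟨C+1, by linarith, fun s hs => ?_⟩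
    exact vfun_le hu0 hC0.le h0 h1.le hC hs
  have hg0 : ∀ k, 1 ≤ k → (0:ℝ) ≤ gplus u k :=
    fun k hk => le_trans zero_le_one (one_le_gplus hu0 hub hk)
  have hgm : ∀ s s' : ℕ, s ≤ s' → gplus u s ≤ gplus u s' :=
    fun s s' h => gplus_mono hu0 hub h
  have hglow : ∀ α : ℝ, 0 < α → α < 1 →
      ∃ c, 0 < c ∧ ∀ k : ℕ, 1 ≤ k → c * (k:ℝ)^α ≤ gplus u k := by
    intro α h0 h1
    obtain ⟨B, hB1, hB⟩ := hvdecay ((1+α)/2) (by linarith) (by linarith)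
    obtain ⟨N, hN1, hN⟩ := rpow_dominates α ((1+α)/2) 0 (Real.log B) h0.le (by linarith)
    have hNα : (0:ℝ) < ((N:ℝ))^α := by
      apply Real.rpow_pos_of_pos
      exact_mod_cast hN1
    refine ⟨min 1 (1/((N:ℝ))^α), lt_min one_pos (by positivity), fun k hk => ?_⟩
    rcases le_or_gt N k with h | h
    · have hlow := gplus_lower hu0 (lt_trans one_pos hB1) hB hk hub
      have h2 := hN k h
      have h3 : (0:ℝ) ≤ (k:ℝ)^α := Real.rpow_nonneg (by positivity) _
      have h4 : min 1 (1/((N:ℝ))^α) * (k:ℝ)^α ≤ 1 * (k:ℝ)^α :=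
        mul_le_mul_of_nonneg_right (min_le_left _ _) h3
      simp only [zero_mul, add_zero] at h2
      linarith
    · have h5 : (1:ℝ) ≤ gplus u k := one_le_gplus hu0 hub hk
      have h6 : (k:ℝ)^α ≤ ((N:ℝ))^α := by
        apply Real.rpow_le_rpow (by positivity) (by exact_mod_cast h.le) h0.le
      have h7 : min 1 (1/((N:ℝ))^α) * (k:ℝ)^α ≤ (1/((N:ℝ))^α) * ((N:ℝ))^α := by
        apply mul_le_mul (min_le_right _ _) h6 (Real.rpow_nonneg (by positivity) _)
          (by positivity)
      have h8 : (1/((N:ℝ))^α) * ((N:ℝ))^α = 1 := by field_simp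
      rw [h8] at h7
      linarith
  -- the F-function
  set M : ℝ := max CΓ 0 with hMdef
  have hM0 : (0:ℝ) ≤ M := le_max_right _ _
  set Ctot : ℝ := ∑' m : ℕ, (1 + M * (m:ℝ)^d) * (1/((m:ℝ)+1)^(d+3)) with hCtotdef
  have hCtot0 : 0 ≤ Ctot := tsum_nonneg fun m => by positivity
  have hA0 : 0 ≤ Ashift u := Ashift_nonneg
  set E : ℕ → ℝ := fun n => Real.exp (-(Ghat (gplus u) n)) with hEdef
  have hE0 : ∀ n, 0 < E n := fun n => Real.exp_pos _
  have hE1 : ∀ n, E n ≤ 1 := by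
    intro n
    rw [hEdef, Real.exp_le_one_iff]
    have := Ghat_nonneg (g := gplus u) n
    linarith
  have hEanti : ∀ {n n' : ℕ}, n ≤ n' → E n' ≤ E n := by
    intro n n' h
    rw [hEdef]
    apply Real.exp_le_exp.2
    have := Ghat_mono (g := gplus u) h
    linarith
  set Fm : ℕ → ℝ := fun n => Real.exp (Ashift u) * F0 (d+3) n * E n with hFmdef
  have hFm0 : ∀ n, 0 ≤ Fm n := fun n =>
    mul_nonneg (mul_nonneg (Real.exp_pos _).le (F0_nonneg n)) (hE0 n).le
  refine ⟨Fm, 2^(d+3+1) * Ctot * Real.exp (Ashift u), Real.exp (Ashift u) * Ctot,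
    ⟨hFm0, ?_, ?_⟩, ?_, ?_⟩
  · -- antitone
    intro r s hrs
    rw [hFmdef]
    exact mul_le_mul (mul_le_mul_of_nonneg_left (F0_anti hq2 hrs) (Real.exp_pos _).le)
      (hEanti hrs) (hE0 s).le
      (mul_nonneg (Real.exp_pos _).le (F0_nonneg r))
  · -- decay
    intro α h0 h1
    obtain ⟨c, hc0, hc⟩ := hglow α h0 h1
    have hF00 : 0 < F0 (d+3) 0 := F0_pos hq2 0
    refine ⟨Real.exp (Ashift u) * F0 (d+3) 0, c,
      mul_pos (Real.exp_pos _) hF00, hc0, fun r hr => ?_⟩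
    have hGhatlow : c * (r:ℝ)^α ≤ Ghat (gplus u) r := Ghat_lower hc0 h1.le hc hr
    have h2 : E r ≤ Real.exp (-(c * (r:ℝ)^α)) := by
      rw [hEdef]
      apply Real.exp_le_exp.2
      linarith
    rw [hFmdef]
    calc Real.exp (Ashift u) * F0 (d+3) r * E r
        ≤ Real.exp (Ashift u) * F0 (d+3) 0 * E r := by
          apply mul_le_mul_of_nonneg_right _ (hE0 r).le
          exact mul_le_mul_of_nonneg_left (F0_anti hq2 (Nat.zero_le r)) (Real.exp_pos _).le
      _ ≤ Real.exp (Ashift u) * F0 (d+3) 0 * Real.exp (-(c * (r:ℝ)^α)) := by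
          apply mul_le_mul_of_nonneg_left h2
          exact mul_nonneg (Real.exp_pos _).le hF00.le
  · -- domination
    intro r hr
    have h1 : Ghat (gplus u) r ≤ gplus u r := Ghat_le hg0 hgm hr (hg0 r hr)
    have h2 : Real.exp (-(gplus u r)) ≤ E r := by
      rw [hEdef]
      exact Real.exp_le_exp.2 (by linarith)
    have h3 : 1/((r:ℝ)+1)^(d+3) ≤ F0 (d+3) r := hterm_le_F0 hq2 r
    have hvge : u r ≤ vfun u r := u_le_vfun hub r
    have e1 : Real.exp (Ashift u) * Real.exp (-(gplus u r)) = Real.exp (-(gfun u r)) := by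
      rw [← Real.exp_add]
      congr 1
      unfold gplus
      ring
    have e2 : Real.exp (-(gfun u r)) = vfun u r := exp_neg_gfun hu0 hub r
    have e3 : Real.exp (Ashift u) * (1/((r:ℝ)+1)^(d+3)) * Real.exp (-(gplus u r))
        = (1/((r:ℝ)+1)^(d+3)) * vfun u r := by
      rw [mul_comm (Real.exp (Ashift u)) (1/((r:ℝ)+1)^(d+3)), mul_assoc, e1, e2]
    have e4 : f r = (1/((r:ℝ)+1)^(d+3)) * u r := by
      show f r = (1/((r:ℝ)+1)^(d+3)) * (f r * ((r:ℝ)+1)^(d+3))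
      field_simp
    rw [hFmdef]
    calc f r = (1/((r:ℝ)+1)^(d+3)) * u r := e4
      _ ≤ (1/((r:ℝ)+1)^(d+3)) * vfun u r :=
          mul_le_mul_of_nonneg_left hvge (by positivity)
      _ = Real.exp (Ashift u) * (1/((r:ℝ)+1)^(d+3)) * Real.exp (-(gplus u r)) := e3.symm
      _ ≤ Real.exp (Ashift u) * F0 (d+3) r * Real.exp (-(gplus u r)) := by
          apply mul_le_mul_of_nonneg_right _ (Real.exp_pos _).le
          exact mul_le_mul_of_nonneg_left h3 (Real.exp_pos _).le
      _ ≤ Real.exp (Ashift u) * F0 (d+3) r * E r := by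
          apply mul_le_mul_of_nonneg_left h2
          exact mul_nonneg (Real.exp_pos _).le (F0_nonneg r)
  · -- graph part
    intro Γ' _ _ G hconn hdim
    have hdim' : ∀ (x : Γ') (r : ℕ), ((ball G x r).card : ℝ) ≤ 1 + M * (r:ℝ)^d := by
      intro x r
      refine (hdim x r).trans ?_
      have h1 : CΓ ≤ M := le_max_left _ _
      have h2 : (0:ℝ) ≤ (r:ℝ)^d := by positivity
      nlinarith
    have hsum : ∀ x : Γ', ∑ y : Γ', F0 (d+3) (G.dist x y) ≤ Ctot :=
      fun x => sum_F0_le G d M hM0 hdim' x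
    constructor
    · intro x y
      have hsumy : ∑ z : Γ', F0 (d+3) (G.dist z y) ≤ Ctot := by
        have hc : ∑ z : Γ', F0 (d+3) (G.dist z y) = ∑ z : Γ', F0 (d+3) (G.dist y z) :=
          Finset.sum_congr rfl fun z _ => by rw [SimpleGraph.dist_comm]
        rw [hc]; exact hsum y
      have hK0 : (0:ℝ) ≤ 2^(d+3) * (Real.exp (Ashift u) * Real.exp (Ashift u)) *
          F0 (d+3) (G.dist x y) * E (G.dist x y) :=
        mul_nonneg (mul_nonneg (mul_nonneg (by positivity)
          (mul_nonneg (Real.exp_pos _).le (Real.exp_pos _).le))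
          (F0_nonneg _)) (hE0 _).le
      have key : ∀ z : Γ', Fm (G.dist x z) * Fm (G.dist z y) ≤
          (2^(d+3) * (Real.exp (Ashift u) * Real.exp (Ashift u)) *
            F0 (d+3) (G.dist x y) * E (G.dist x y)) *
            (F0 (d+3) (G.dist x z) + F0 (d+3) (G.dist z y)) := by
        intro z
        have hab : G.dist x y ≤ G.dist x z + G.dist z y := hconn.dist_triangle
        have hE2 : E (G.dist x z) * E (G.dist z y) ≤ E (G.dist x y) := by
          rw [hEdef]
          rw [← Real.exp_add]
          apply Real.exp_le_exp.2
          have s1 := Ghat_subadd hg0 (G.dist x z) (G.dist z y)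
          have s2 := Ghat_mono (g := gplus u) hab
          linarith
        have hsum0 : (0:ℝ) ≤ F0 (d+3) (G.dist x z) + F0 (d+3) (G.dist z y) :=
          add_nonneg (F0_nonneg _) (F0_nonneg _)
        have hF2 : F0 (d+3) (G.dist x z) * F0 (d+3) (G.dist z y) ≤
            2^(d+3) * F0 (d+3) (G.dist x y) *
              (F0 (d+3) (G.dist x z) + F0 (d+3) (G.dist z y)) := by
          have h2q0 : (0:ℝ) ≤ 2^(d+3) * F0 (d+3) (G.dist x y) :=
            mul_nonneg (by positivity) (F0_nonneg _)
          rcases (by omega : G.dist x y ≤ 2 * G.dist x z ∨ G.dist x y ≤ 2 * G.dist z y)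
            with hca | hcb
          · have f1 : F0 (d+3) (G.dist x z) ≤ 2^(d+3) * F0 (d+3) (G.dist x y) := by
              refine (F0_double hq2 (G.dist x z)).trans ?_
              exact mul_le_mul_of_nonneg_left (F0_anti hq2 hca) (by positivity)
            calc F0 (d+3) (G.dist x z) * F0 (d+3) (G.dist z y)
                ≤ (2^(d+3) * F0 (d+3) (G.dist x y)) * F0 (d+3) (G.dist z y) :=
                  mul_le_mul_of_nonneg_right f1 (F0_nonneg _)
              _ ≤ _ := by
                  apply mul_le_mul_of_nonneg_left _ h2q0
                  linarith [F0_nonneg (q := d+3) (G.dist x z)]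
          · have f1 : F0 (d+3) (G.dist z y) ≤ 2^(d+3) * F0 (d+3) (G.dist x y) := by
              refine (F0_double hq2 (G.dist z y)).trans ?_
              exact mul_le_mul_of_nonneg_left (F0_anti hq2 hcb) (by positivity)
            calc F0 (d+3) (G.dist x z) * F0 (d+3) (G.dist z y)
                ≤ F0 (d+3) (G.dist x z) * (2^(d+3) * F0 (d+3) (G.dist x y)) :=
                  mul_le_mul_of_nonneg_left f1 (F0_nonneg _)
              _ = (2^(d+3) * F0 (d+3) (G.dist x y)) * F0 (d+3) (G.dist x z) := by ring
              _ ≤ _ := by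
                  apply mul_le_mul_of_nonneg_left _ h2q0
                  linarith [F0_nonneg (q := d+3) (G.dist z y)]
        rw [hFmdef]
        calc Real.exp (Ashift u) * F0 (d+3) (G.dist x z) * E (G.dist x z) *
              (Real.exp (Ashift u) * F0 (d+3) (G.dist z y) * E (G.dist z y))
            = (Real.exp (Ashift u) * Real.exp (Ashift u)) *
              ((F0 (d+3) (G.dist x z) * F0 (d+3) (G.dist z y)) *
                (E (G.dist x z) * E (G.dist z y))) := by ring
          _ ≤ (Real.exp (Ashift u) * Real.exp (Ashift u)) *
              ((2^(d+3) * F0 (d+3) (G.dist x y) *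
                (F0 (d+3) (G.dist x z) + F0 (d+3) (G.dist z y))) * E (G.dist x y)) := by
              apply mul_le_mul_of_nonneg_left _
                (mul_nonneg (Real.exp_pos _).le (Real.exp_pos _).le)
              apply mul_le_mul hF2 hE2 (mul_nonneg (hE0 _).le (hE0 _).le)
                (mul_nonneg (mul_nonneg (by positivity) (F0_nonneg _)) hsum0)
          _ = (2^(d+3) * (Real.exp (Ashift u) * Real.exp (Ashift u)) *
              F0 (d+3) (G.dist x y) * E (G.dist x y)) *
              (F0 (d+3) (G.dist x z) + F0 (d+3) (G.dist z y)) := by ring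
      calc ∑ z : Γ', Fm (G.dist x z) * Fm (G.dist z y)
          ≤ ∑ z : Γ', (2^(d+3) * (Real.exp (Ashift u) * Real.exp (Ashift u)) *
              F0 (d+3) (G.dist x y) * E (G.dist x y)) *
              (F0 (d+3) (G.dist x z) + F0 (d+3) (G.dist z y)) :=
            Finset.sum_le_sum (fun z _ => key z)
        _ = (2^(d+3) * (Real.exp (Ashift u) * Real.exp (Ashift u)) *
              F0 (d+3) (G.dist x y) * E (G.dist x y)) *
              (∑ z : Γ', F0 (d+3) (G.dist x z) + ∑ z : Γ', F0 (d+3) (G.dist z y)) := by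
            rw [← Finset.mul_sum, Finset.sum_add_distrib]
        _ ≤ (2^(d+3) * (Real.exp (Ashift u) * Real.exp (Ashift u)) *
              F0 (d+3) (G.dist x y) * E (G.dist x y)) * (Ctot + Ctot) :=
            mul_le_mul_of_nonneg_left (add_le_add (hsum x) hsumy) hK0
        _ = (2^(d+3+1) * Ctot * Real.exp (Ashift u)) * Fm (G.dist x y) := by
            rw [hFmdef]
            ring
    · intro x
      calc ∑ y : Γ', Fm (G.dist x y)
          ≤ ∑ y : Γ', Real.exp (Ashift u) * F0 (d+3) (G.dist x y) := by
            apply Finset.sum_le_sum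
            intro y _
            rw [hFmdef]
            calc Real.exp (Ashift u) * F0 (d+3) (G.dist x y) * E (G.dist x y)
                ≤ Real.exp (Ashift u) * F0 (d+3) (G.dist x y) * 1 :=
                  mul_le_mul_of_nonneg_left (hE1 _)
                    (mul_nonneg (Real.exp_pos _).le (F0_nonneg _))
              _ = Real.exp (Ashift u) * F0 (d+3) (G.dist x y) := mul_one _
        _ = Real.exp (Ashift u) * ∑ y : Γ', F0 (d+3) (G.dist x y) := by
            rw [Finset.mul_sum]
        _ ≤ Real.exp (Ashift u) * Ctot :=
            mul_le_mul_of_nonneg_left (hsum x) (Real.exp_pos _).le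


end Stability
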